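/- Let G be a 3-connected, cubic, bipartite graph with a non-trivial tight cut ∂X. If G1 and G2 are the two tight cut contractions associated with ∂X, then G is a star product of G1 and G2, namely G is isomorphic to (G1,c1)*(G2,c2) where c1 and c2 are the respective contraction vertices. -/

import Mathlib

open SimpleGraph

/-- A graph is cubic if every vertex has degree 3. -/
def IsCubic {V : Type*} (G : SimpleGraph V) : Prop :=
  ∀ v : V, (G.neighborSet v).ncard = 3

/-- A 2-factor of `G` is a 2-regular spanning subgraph of `G`. -/
def IsTwoFactor {V : Type*} (G : SimpleGraph V) (H : G.Subgraph) : Prop :=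
  H.IsSpanning ∧ ∀ v : V, (H.neighborSet v).ncard = 2

/-- A graph is 2-factor Hamiltonian if every 2-factor of it is a Hamiltonian cycle,
i.e. a connected 2-regular spanning subgraph. -/
def IsTwoFactorHamiltonian {V : Type*} (G : SimpleGraph V) : Prop :=
  ∀ H : G.Subgraph, IsTwoFactor G H → H.Connected

/-- A brace is a connected bipartite graph on at least four vertices in which every
matching of size at most two is contained in a perfect matching. -/
def IsBrace {V : Type*} (G : SimpleGraph V) : Prop :=
  G.Connected ∧ G.Colorable 2 ∧ 4 ≤ Nat.card V ∧
    ∀ M : G.Subgraph, M.IsMatching → M.edgeSet.ncard ≤ 2 →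
      ∃ P : G.Subgraph, M ≤ P ∧ P.IsPerfectMatching

/-- The Heawood graph, as the point-line incidence graph of the Fano plane:
points and lines are indexed by `Fin 7`, and point `p` lies on line `l` iff
`p + l ∈ {0, 1, 3}` (mod 7), `{0,1,3}` being a planar difference set mod 7. -/
def heawoodGraph : SimpleGraph (Fin 7 ⊕ Fin 7) :=
  SimpleGraph.fromRel fun a b => ∃ p l : Fin 7,
    a = Sum.inl p ∧ b = Sum.inr l ∧ (p + l = 0 ∨ p + l = 1 ∨ p + l = 3)

/-- A cycle (given as a closed walk) alternates between edges of the subgraph `M`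
and edges not in `M`; the wrap-around pair is included by appending the first edge. -/
def IsAlternatingCycle {V : Type*} {G : SimpleGraph V} (M : G.Subgraph) {v : V}
    (p : G.Walk v v) : Prop :=
  p.IsCycle ∧
    List.Chain' (fun e f => e ∈ M.edgeSet ↔ f ∉ M.edgeSet) (p.edges ++ p.edges.take 1)

/-- `σ` is a Pfaffian orientation of `G`: it orients every edge (exactly one direction),
and for every perfect matching `M` and every `M`-alternating cycle, the number of
its edges oriented in agreement with the direction of traversal is odd. -/
def IsPfaffianOrientation {V : Type*} (G : SimpleGraph V) (σ : V → V → Bool) : Prop :=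
  (∀ u v : V, G.Adj u v → σ u v = !σ v u) ∧
  ∀ M : G.Subgraph, M.IsPerfectMatching →
    ∀ (v : V) (p : G.Walk v v), IsAlternatingCycle M p →
      Odd (p.darts.filter fun d => σ d.toProd.1 d.toProd.2).length

/-- A graph with a perfect matching is Pfaffian if it admits a Pfaffian orientation. -/
def IsPfaffian {V : Type*} (G : SimpleGraph V) : Prop :=
  (∃ M : G.Subgraph, M.IsPerfectMatching) ∧ ∃ σ : V → V → Bool, IsPfaffianOrientation G σ

/-- The cut `∂X`: the set of edges of `G` with exactly one endpoint in `X`. -/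
def edgeCut {V : Type*} (G : SimpleGraph V) (X : Set V) : Set (Sym2 V) :=
  {e | e ∈ G.edgeSet ∧ ∃ u w : V, e = s(u, w) ∧ u ∈ X ∧ w ∉ X}

/-- A cut `∂X` is tight if every perfect matching contains exactly one of its edges. -/
def IsTightCut {V : Type*} (G : SimpleGraph V) (X : Set V) : Prop :=
  ∀ M : G.Subgraph, M.IsPerfectMatching → (edgeCut G X ∩ M.edgeSet).ncard = 1

/-- A cut `∂X` is trivial if `|X| = 1` or `|V(G) \ X| = 1`. -/
def IsTrivialCut {V : Type*} (X : Set V) : Prop :=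
  X.ncard = 1 ∨ (Xᶜ : Set V).ncard = 1

/-- The tight cut contraction keeping `X`: contract `V(G) \ X` into a single vertex
(`Sum.inr ()`), deleting loops and parallel edges. -/
def contractOutside {V : Type*} (G : SimpleGraph V) (X : Set V) :
    SimpleGraph (↥X ⊕ Unit) :=
  SimpleGraph.fromRel fun a b =>
    (∃ u v : X, a = Sum.inl u ∧ b = Sum.inl v ∧ G.Adj u v) ∨
    (∃ (u : X) (w : V), w ∉ X ∧ a = Sum.inl u ∧ b = Sum.inr () ∧ G.Adj u w)

/-- A graph is `k`-connected if it has more than `k` vertices and deleting any set of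
fewer than `k` vertices leaves it connected. -/
def IsKConnected {V : Type*} (k : ℕ) (G : SimpleGraph V) : Prop :=
  k < Nat.card V ∧ ∀ S : Set V, S.ncard < k → (G.induce (Sᶜ : Set V)).Connected

/-- A graph is matching covered if it is connected, has an edge, and every edge
lies in a perfect matching. -/
def IsMatchingCovered {V : Type*} (G : SimpleGraph V) : Prop :=
  G.Connected ∧ G.edgeSet.Nonempty ∧
    ∀ e ∈ G.edgeSet, ∃ M : G.Subgraph, M.IsPerfectMatching ∧ e ∈ M.edgeSet

/-- A graph is bridgeless if no edge is a bridge. -/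
def Bridgeless {V : Type*} (G : SimpleGraph V) : Prop :=
  ∀ e : Sym2 V, ¬ G.IsBridge e

/-- `(A, B)` is a bipartition of `G` into the two colour classes `A` and `B`. -/
def IsBipartition {V : Type*} (G : SimpleGraph V) (A B : Set V) : Prop :=
  A ∪ B = Set.univ ∧ Disjoint A B ∧
    ∀ u v : V, G.Adj u v → ((u ∈ A ∧ v ∈ B) ∨ (u ∈ B ∧ v ∈ A))

/-- `G` is the star product `(G1,v1)*(G2,v2)`, witnessed by the embeddings `f` of
`G1 - v1` and `g` of `G2 - v2` into `G`, and the bijection `m` matching the three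
neighbours of `v1` to the three neighbours of `v2`: `v1` and `v2` have degree 3,
the images of `f` and `g` partition the vertices of `G`, and the edges of `G` are
exactly the edges of `G1 - v1`, the edges of `G2 - v2`, and the three matching edges
`f x — g (m x)` for `x` a neighbour of `v1`. -/
def IsStarProductWitness {V V1 V2 : Type*} (G : SimpleGraph V)
    (G1 : SimpleGraph V1) (v1 : V1) (G2 : SimpleGraph V2) (v2 : V2)
    (f : V1 → V) (g : V2 → V) (m : V1 → V2) : Prop :=
  (G1.neighborSet v1).ncard = 3 ∧ (G2.neighborSet v2).ncard = 3 ∧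
  Set.InjOn f {x | x ≠ v1} ∧ Set.InjOn g {y | y ≠ v2} ∧
  (∀ x y, x ≠ v1 → y ≠ v2 → f x ≠ g y) ∧
  (∀ v : V, (∃ x, x ≠ v1 ∧ f x = v) ∨ (∃ y, y ≠ v2 ∧ g y = v)) ∧
  Set.BijOn m (G1.neighborSet v1) (G2.neighborSet v2) ∧
  (∀ a b : V, G.Adj a b ↔
    ((∃ x y, x ≠ v1 ∧ y ≠ v1 ∧ G1.Adj x y ∧ a = f x ∧ b = f y) ∨
     (∃ x y, x ≠ v2 ∧ y ≠ v2 ∧ G2.Adj x y ∧ a = g x ∧ b = g y) ∨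
     (∃ x, G1.Adj v1 x ∧ ((a = f x ∧ b = g (m x)) ∨ (b = f x ∧ a = g (m x))))))

/-- `G` is a star product `(G1,v1)*(G2,v2)`. -/
def IsStarProduct {V V1 V2 : Type*} (G : SimpleGraph V)
    (G1 : SimpleGraph V1) (v1 : V1) (G2 : SimpleGraph V2) (v2 : V2) : Prop :=
  ∃ (f : V1 → V) (g : V2 → V) (m : V1 → V2),
    IsStarProductWitness G G1 v1 G2 v2 f g m

/-- The principal 3-edge cut of a star product: the three added matching edges. -/
def principalCut {V V1 V2 : Type*} (G1 : SimpleGraph V1) (v1 : V1)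
    (f : V1 → V) (g : V2 → V) (m : V1 → V2) : Set (Sym2 V) :=
  {e | ∃ x, G1.Adj v1 x ∧ e = s(f x, g (m x))}

section AuxiliaryForStatement5

open Finset

set_option linter.unusedSectionVars false
set_option maxHeartbeats 1000000

variable {V : Type*} [Fintype V] [DecidableEq V] {G : SimpleGraph V} [DecidableRel G.Adj]

lemma deg3 (h : IsCubic G) (v : V) : (G.neighborFinset v).card = 3 := by
  rw [neighborFinset_def, ← Set.ncard_eq_toFinset_card']
  exact h v

def cnt (G : SimpleGraph V) [DecidableRel G.Adj] (S T : Finset V) : ℕ :=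
  ((S ×ˢ T).filter fun p : V × V => G.Adj p.1 p.2).card

lemma cnt_comm (S T : Finset V) : cnt G S T = cnt G T S := by
  unfold cnt
  apply Finset.card_bij' (fun p _ => Prod.swap p) (fun p _ => Prod.swap p) <;>
    simp +contextual [adj_comm]

lemma cnt_eq_sum (S T : Finset V) :
    cnt G S T = ∑ v ∈ S, (T.filter fun w => G.Adj v w).card := by
  unfold cnt
  rw [Finset.card_eq_sum_card_fiberwise (f := Prod.fst) (t := S)
    (by intro p hp; simp only [Finset.mem_coe, mem_filter, mem_product] at hp; exact hp.1.1)]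
  refine Finset.sum_congr rfl fun v hv => ?_
  apply Finset.card_bij' (fun p _ => p.2) (fun w _ => (v, w)) <;>
    simp +contextual [eq_comm, hv]

lemma cnt_le (h : IsCubic G) (S T : Finset V) : cnt G S T ≤ 3 * S.card := by
  rw [cnt_eq_sum, mul_comm]
  calc ∑ v ∈ S, (T.filter fun w => G.Adj v w).card
      ≤ ∑ v ∈ S, 3 := by
        refine Finset.sum_le_sum fun v _ => ?_
        calc (T.filter fun w => G.Adj v w).card ≤ (G.neighborFinset v).card :=
              Finset.card_le_card (by intro w hw; simp only [mem_filter] at hw; simpa using hw.2)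
          _ = 3 := deg3 h v
    _ = S.card * 3 := by rw [Finset.sum_const, smul_eq_mul]

lemma cnt_univ (h : IsCubic G) (S : Finset V) : cnt G S univ = 3 * S.card := by
  rw [cnt_eq_sum, mul_comm]
  rw [Finset.sum_congr rfl (fun v _ => ?_), Finset.sum_const, smul_eq_mul]
  show (univ.filter fun w => G.Adj v w).card = 3
  rw [← deg3 h v]
  congr 1
  ext w; simp

lemma cnt_restrict {S T : Finset V} (hT : ∀ v ∈ S, ∀ w, G.Adj v w → w ∈ T) :
    cnt G S univ = cnt G S T := by
  rw [cnt_eq_sum, cnt_eq_sum]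
  refine Finset.sum_congr rfl fun v hv => ?_
  congr 1
  ext w
  simp only [mem_filter, mem_univ, true_and, iff_def]
  exact ⟨fun hw => ⟨hT v hv w hw, hw⟩, fun hw => hw.2⟩

lemma cnt_union {S T₁ T₂ : Finset V} (hd : Disjoint T₁ T₂) :
    cnt G S (T₁ ∪ T₂) = cnt G S T₁ + cnt G S T₂ := by
  unfold cnt
  rw [Finset.product_union, Finset.filter_union]
  refine Finset.card_union_of_disjoint ?_
  exact Finset.disjoint_filter_filter (Finset.disjoint_product.mpr (Or.inr hd))

lemma fin2_ne {x y : Fin 2} (h : x ≠ y) (h0 : y ≠ 0) : x = 0 := by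
  fin_cases x <;> fin_cases y <;> simp_all

lemma colorClasses_card (h : IsCubic G) (c : G.Coloring (Fin 2)) :
    (univ.filter fun x => c x = 0).card = (univ.filter fun x => c x ≠ 0).card := by
  set A := univ.filter fun x : V => c x = 0 with hA
  set B := univ.filter fun x : V => c x ≠ 0 with hB
  have h1 : cnt G A univ = cnt G A B := by
    refine cnt_restrict fun v hv w hw => ?_
    simp only [hA, hB, mem_filter, mem_univ, true_and] at hv ⊢
    exact fun h0 => (c.valid hw) (hv.trans h0.symm)
  have h2 : cnt G B univ = cnt G B A := by
    refine cnt_restrict fun v hv w hw => ?_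
    simp only [hA, hB, mem_filter, mem_univ, true_and] at hv ⊢
    exact fin2_ne (c.valid (G.adj_symm hw)) hv
  have h3 := cnt_comm (G := G) A B
  have h4 := cnt_univ h A
  have h5 := cnt_univ h B
  omega

lemma edge_in_pm_aux (h : IsCubic G) (c : G.Coloring (Fin 2)) (u v : V)
    (huv : G.Adj u v) (hu : c u = 0) :
    ∃ M : G.Subgraph, M.IsPerfectMatching ∧ M.Adj u v := by
  set A := univ.filter fun x : V => c x = 0 with hA
  set B := univ.filter fun x : V => c x ≠ 0 with hB
  have hmemA : ∀ x : V, x ∈ A ↔ c x = 0 := by intro x; simp [hA]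
  have huA : u ∈ A := (hmemA u).mpr hu
  -- the constrained neighbourhoods
  set t : {a // a ∈ A} → Finset V :=
    fun a => if (a : V) = u then {v} else (G.neighborFinset (a : V)).erase v with ht
  have htadj : ∀ (a : {a // a ∈ A}) (x : V), x ∈ t a → G.Adj (a : V) x := by
    intro a x hx
    simp only [ht] at hx
    split at hx
    · rename_i h'
      rw [Finset.mem_singleton] at hx
      subst hx; rw [h']; exact huv
    · exact (G.mem_neighborFinset _ _).mp (Finset.mem_of_mem_erase hx)
  have key : ∀ s : Finset {a // a ∈ A}, u ∉ s.image Subtype.val →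
      s.card ≤ (s.biUnion t).card := by
    intro s hus
    -- lower bound on the sum of |t a|
    have hterm : ∀ a ∈ s, 3 ≤ (t a).card + (if G.Adj (a : V) v then 1 else 0) := by
      intro a has
      have hane : (a : V) ≠ u := by
        intro hh; exact hus (Finset.mem_image.mpr ⟨a, has, hh⟩)
      simp only [ht, if_neg hane]
      by_cases hav : G.Adj (a : V) v
      · have hd := deg3 h (a : V)
        rw [if_pos hav, Finset.card_erase_of_mem ((G.mem_neighborFinset _ _).mpr hav), hd]
      · rw [if_neg hav, Finset.erase_eq_of_notMem
          (fun hm => hav ((G.mem_neighborFinset _ _).mp hm)), deg3 h]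

  -- at most 2 vertices of s are adjacent to v
    have hk : (s.filter fun a : {a // a ∈ A} => G.Adj (a : V) v).card ≤ 2 := by
      have hsub : (s.filter fun a : {a // a ∈ A} => G.Adj (a : V) v).image Subtype.val ⊆
          (G.neighborFinset v).erase u := by
        intro x hx
        obtain ⟨a, ha, rfl⟩ := Finset.mem_image.mp hx
        rw [Finset.mem_filter] at ha
        refine Finset.mem_erase.mpr ⟨?_, (G.mem_neighborFinset _ _).mpr (G.adj_symm ha.2)⟩
        intro hh; exact hus (Finset.mem_image.mpr ⟨a, ha.1, hh⟩)
      calc (s.filter fun a : {a // a ∈ A} => G.Adj (a : V) v).card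
          = ((s.filter fun a : {a // a ∈ A} => G.Adj (a : V) v).image Subtype.val).card :=
            (Finset.card_image_of_injective _ Subtype.val_injective).symm
        _ ≤ ((G.neighborFinset v).erase u).card := Finset.card_le_card hsub
        _ ≤ 2 := by
            rw [Finset.card_erase_of_mem ((G.mem_neighborFinset _ _).mpr (G.adj_symm huv)), deg3 h]
    have hlow : 3 * s.card ≤ (∑ a ∈ s, (t a).card) + 2 := by
      calc 3 * s.card = ∑ _a ∈ s, 3 := by rw [Finset.sum_const, smul_eq_mul, mul_comm]
        _ ≤ ∑ a ∈ s, ((t a).card + (if G.Adj (a : V) v then 1 else 0)) :=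
            Finset.sum_le_sum hterm
        _ = (∑ a ∈ s, (t a).card) + ∑ a ∈ s, (if G.Adj (a : V) v then 1 else 0) :=
            Finset.sum_add_distrib
        _ ≤ (∑ a ∈ s, (t a).card) + 2 := by
            refine Nat.add_le_add_left ?_ _
            have heq : (∑ a ∈ s, if G.Adj (a : V) v then 1 else 0) =
                (s.filter fun a : {a // a ∈ A} => G.Adj (a : V) v).card := by
              rw [← Finset.sum_filter, Finset.card_eq_sum_ones]
            rw [heq]
            exact hk
  -- upper bound via cnt
    have hup : (∑ a ∈ s, (t a).card) ≤ cnt G (s.image Subtype.val) (s.biUnion t) := by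
      rw [cnt_eq_sum, Finset.sum_image (fun x _ y _ hxy => Subtype.val_injective hxy)]
      refine Finset.sum_le_sum fun a ha => ?_
      refine Finset.card_le_card fun x hx => ?_
      exact Finset.mem_filter.mpr ⟨Finset.mem_biUnion.mpr ⟨a, ha, hx⟩, htadj a x hx⟩
    have hcard : cnt G (s.image Subtype.val) (s.biUnion t) ≤ 3 * (s.biUnion t).card := by
      rw [cnt_comm]; exact cnt_le h _ _
    omega
  have hall : ∀ s : Finset {a // a ∈ A}, s.card ≤ (s.biUnion t).card := by
    intro s
    by_cases hus : u ∈ s.image Subtype.val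
    · obtain ⟨a0, ha0s, ha0⟩ := Finset.mem_image.mp hus
      have hb : s.biUnion t = insert v ((s.erase a0).biUnion t) := by
        conv_lhs => rw [← Finset.insert_erase ha0s]
        rw [Finset.biUnion_insert]
        have : t a0 = {v} := by rw [ht]; simp [ha0]
        rw [this, ← Finset.insert_eq]
      have hv_not : v ∉ (s.erase a0).biUnion t := by
        intro hv
        obtain ⟨a, ha, hva⟩ := Finset.mem_biUnion.mp hv
        have hane : (a : V) ≠ u := by
          intro hh
          exact (Finset.ne_of_mem_erase ha)
            (Subtype.val_injective (hh.trans ha0.symm))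
        simp only [ht, if_neg hane] at hva
        exact (Finset.notMem_erase _ _) hva
      have hkey := key (s.erase a0) (by
        intro hh
        obtain ⟨a, ha, hva⟩ := Finset.mem_image.mp hh
        exact (Finset.ne_of_mem_erase ha) (Subtype.val_injective (hva.trans ha0.symm)))
      rw [hb, Finset.card_insert_of_notMem hv_not]
      have := Finset.card_erase_add_one ha0s
      omega
    · exact key s hus
  obtain ⟨f, hfinj, hft⟩ := (Finset.all_card_le_biUnion_card_iff_exists_injective t).mp hall
  have hfadj : ∀ a : {a // a ∈ A}, G.Adj (a : V) (f a) := fun a => htadj a (f a) (hft a)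
  have hfu : f ⟨u, huA⟩ = v := by
    have := hft ⟨u, huA⟩
    simp only [ht, if_pos] at this
    exact Finset.mem_singleton.mp this
  have hfB : ∀ a : {a // a ∈ A}, f a ∈ B := by
    intro a
    simp only [hB, mem_filter, mem_univ, true_and]
    intro h0
    have hca : c (a : V) = 0 := (hmemA _).mp a.2
    exact (c.valid (hfadj a)) (hca.trans h0.symm)
  -- f is surjective onto B
  have himg : (univ.image fun a : {a // a ∈ A} => f a) = B := by
    refine Finset.eq_of_subset_of_card_le (fun x hx => ?_) ?_
    · obtain ⟨a, _, rfl⟩ := Finset.mem_image.mp hx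
      exact hfB a
    · rw [Finset.card_image_of_injective _ hfinj, Finset.card_univ, Fintype.card_coe]
      exact le_of_eq (colorClasses_card h c).symm
  -- build the matching
  refine ⟨⟨Set.univ,
      fun x y => (∃ ha : x ∈ A, f ⟨x, ha⟩ = y) ∨ (∃ hb : y ∈ A, f ⟨y, hb⟩ = x),
      ?_, fun {x y} _ => Set.mem_univ x, ?_⟩, ⟨?_, fun x => Set.mem_univ x⟩, ?_⟩
  · rintro x y (⟨ha, rfl⟩ | ⟨hb, rfl⟩)
    · exact hfadj ⟨x, ha⟩
    · exact (hfadj ⟨y, hb⟩).symm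
  · constructor
    rintro x y (⟨ha, rfl⟩ | ⟨hb, rfl⟩)
    · exact Or.inr ⟨ha, rfl⟩
    · exact Or.inl ⟨hb, rfl⟩
  · -- IsMatching
    rintro x -
    by_cases hxA : x ∈ A
    · refine ⟨f ⟨x, hxA⟩, Or.inl ⟨hxA, rfl⟩, ?_⟩
      rintro y (⟨ha, rfl⟩ | ⟨hb, hfy⟩)
      · rfl
      · exfalso
        have := hfB ⟨y, hb⟩
        rw [hfy] at this
        simp only [hB, mem_filter, mem_univ, true_and] at this
        exact this ((hmemA x).mp hxA)
    · have hxB : x ∈ B := by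
        simp only [hB, mem_filter, mem_univ, true_and]
        intro h0; exact hxA ((hmemA x).mpr h0)
      rw [← himg] at hxB
      obtain ⟨a, -, hax⟩ := Finset.mem_image.mp hxB
      refine ⟨(a : V), Or.inr ⟨a.2, by rw [Subtype.coe_eta]; exact hax⟩, ?_⟩
      rintro y (⟨ha, hfy⟩ | ⟨hb, hfy⟩)
      · exfalso
        have := hfB a
        rw [hax] at this
        simp only [hB, mem_filter, mem_univ, true_and] at this
        exact this ((hmemA x).mp ha)
      · have : f ⟨y, hb⟩ = f a := by rw [hfy, hax]
        exact congrArg Subtype.val (hfinj this)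
  · exact Or.inl ⟨huA, hfu⟩

lemma edge_in_pm (h : IsCubic G) (c : G.Coloring (Fin 2)) {u v : V}
    (huv : G.Adj u v) :
    ∃ M : G.Subgraph, M.IsPerfectMatching ∧ M.Adj u v := by
  by_cases hu : c u = 0
  · exact edge_in_pm_aux h c u v huv hu
  · have hv : c v = 0 := fin2_ne (c.valid huv.symm) hu
    obtain ⟨M, hM, hadj⟩ := edge_in_pm_aux h c v u huv.symm hv
    exact ⟨M, hM, hadj.symm⟩

lemma fin2_eq {x y z : Fin 2} (h1 : x ≠ z) (h2 : y ≠ z) : x = y := by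
  fin_cases x <;> fin_cases y <;> fin_cases z <;> simp_all

lemma cut_pair {X : Set V} (htight : IsTightCut G X) {M : G.Subgraph}
    (hM : M.IsPerfectMatching) :
    ∃ u w, u ∈ X ∧ w ∉ X ∧ M.Adj u w ∧
      ∀ u' w', u' ∈ X → w' ∉ X → M.Adj u' w' → u' = u ∧ w' = w := by
  have h1 := htight M hM
  rw [Set.ncard_eq_one] at h1
  obtain ⟨e, he⟩ := h1
  have hemem : e ∈ edgeCut G X ∩ M.edgeSet := by rw [he]; rfl
  obtain ⟨⟨heG, u, w, rfl, hu, hw⟩, heM⟩ := hemem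
  refine ⟨u, w, hu, hw, heM, ?_⟩
  intro u' w' hu' hw' hM'
  have hmem2 : s(u', w') ∈ edgeCut G X ∩ M.edgeSet :=
    ⟨⟨(G.mem_edgeSet).mpr (M.adj_sub hM'), u', w', rfl, hu', hw'⟩, hM'⟩
  rw [he, Set.mem_singleton_iff, Sym2.eq_iff] at hmem2
  rcases hmem2 with ⟨h1, h2⟩ | ⟨h1, h2⟩
  · exact ⟨h1, h2⟩
  · exact absurd (h1 ▸ hu') hw

lemma parity {X : Set V} (Xf : Finset V) (hmem : ∀ x, x ∈ Xf ↔ x ∈ X)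
    (c : G.Coloring (Fin 2)) {M : G.Subgraph} (hM : M.IsPerfectMatching)
    {u w : V} (hu : u ∈ X) (hw : w ∉ X) (hMuw : M.Adj u w)
    (huniq : ∀ u' w', u' ∈ X → w' ∉ X → M.Adj u' w' → u' = u) :
    (Xf.filter fun x => c x = c u).card = (Xf.filter fun x => c x ≠ c u).card + 1 := by
  have hpm0 : ∀ v : V, ∃! y, M.Adj v y := fun v => hM.1 (hM.2 v)
  set pm : V → V := fun v => (hpm0 v).exists.choose with hpmdef
  have hpmadj : ∀ v, M.Adj v (pm v) := fun v => (hpm0 v).exists.choose_spec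
  have hpmuniq : ∀ v y, M.Adj v y → y = pm v :=
    fun v y hy => (hpm0 v).unique hy (hpmadj v)
  have hpminv : ∀ v, pm (pm v) = v :=
    fun v => (hpmuniq (pm v) v (hpmadj v).symm).symm
  have hpmu : pm u = w := (hpmuniq u w hMuw).symm
  have hcol : ∀ v, c (pm v) ≠ c v := fun v => c.valid (M.adj_sub (hpmadj v)).symm
  have hpmX : ∀ x, x ∈ X → x ≠ u → pm x ∈ X := by
    intro x hx hne
    by_contra h'
    exact hne (huniq x (pm x) hx h' (hpmadj x))
  set S1 := Xf.filter fun x => c x = c u ∧ x ≠ u with hS1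
  set S2 := Xf.filter fun x => c x ≠ c u with hS2
  have hbij : S1.card = S2.card := by
    apply Finset.card_bij' (fun x _ => pm x) (fun x _ => pm x)
    · intro x hx
      simp only [hS1, Finset.mem_filter] at hx
      obtain ⟨hxf, hxc, hxu⟩ := hx
      have hxX : pm x ∈ X := hpmX x ((hmem x).mp hxf) hxu
      simp only [hS2, Finset.mem_filter]
      exact ⟨(hmem _).mpr hxX, by rw [← hxc] at *; exact hcol x⟩
    · intro x hx
      simp only [hS2, Finset.mem_filter] at hx
      obtain ⟨hxf, hxc⟩ := hx
      have hxu : x ≠ u := fun h => hxc (by rw [h])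
      have hxX : pm x ∈ X := hpmX x ((hmem x).mp hxf) hxu
      simp only [hS1, Finset.mem_filter]
      refine ⟨(hmem _).mpr hxX, fin2_eq (hcol x) hxc.symm, fun h => ?_⟩
      have : x = pm u := by rw [← h, hpminv]
      rw [hpmu] at this
      exact hw (this ▸ (hmem x).mp hxf)
    · intro x _; exact hpminv x
    · intro x _; exact hpminv x
  have hsplit : Xf.filter (fun x => c x = c u) = insert u S1 := by
    ext x
    simp only [hS1, Finset.mem_filter, Finset.mem_insert]
    constructor
    · rintro ⟨hxf, hxc⟩
      by_cases hxu : x = u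
      · exact Or.inl hxu
      · exact Or.inr ⟨hxf, hxc, hxu⟩
    · rintro (rfl | ⟨hxf, hxc, hxu⟩)
      · exact ⟨(hmem x).mpr hu, rfl⟩
      · exact ⟨hxf, hxc⟩
  have hnotmem : u ∉ S1 := by simp [hS1]
  rw [hsplit, Finset.card_insert_of_notMem hnotmem, hbij]

lemma endpoints_big {X : Set V} (h3con : IsKConnected 3 G) (Tf : Finset V)
    (hTX : ∀ x ∈ Tf, x ∈ X)
    (hcut : ∀ u w, u ∈ X → w ∉ X → G.Adj u w → u ∈ Tf)
    (hXbig : 3 ≤ X.ncard) (hXc : ∃ y, y ∉ X) : 3 ≤ Tf.card := by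
  by_contra hlt
  push_neg at hlt
  have hconn := h3con.2 (↑Tf : Set V) (by rwa [Set.ncard_coe_finset])
  have hXnot : ∃ x ∈ X, x ∉ Tf := by
    by_contra hall
    push_neg at hall
    have hsub : X ⊆ (↑Tf : Set V) := fun x hx => hall x hx
    have := Set.ncard_le_ncard hsub (Set.toFinite _)
    rw [Set.ncard_coe_finset] at this
    omega
  obtain ⟨x, hxX, hxT⟩ := hXnot
  obtain ⟨y, hyX⟩ := hXc
  have hyT : y ∉ Tf := fun h => hyX (hTX y h)
  have hinv : ∀ (a b : ↥((↑Tf : Set V)ᶜ)) (p : (G.induce ((↑Tf : Set V)ᶜ)).Walk a b),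
      (a : V) ∈ X → (b : V) ∈ X := by
    intro a b p
    induction p with
    | nil => exact id
    | @cons a b' c' hadj p ih =>
      intro ha
      apply ih
      have hadj' : G.Adj (a : V) (b' : V) := hadj
      by_contra hb'
      exact a.2 (Finset.mem_coe.mpr (hcut (a : V) (b' : V) ha hb' hadj'))
  have hreach := hconn.preconnected ⟨x, by simpa using hxT⟩ ⟨y, by simpa using hyT⟩
  obtain ⟨p⟩ := hreach
  exact hyX (hinv _ _ p hxX)

lemma fin2_eq' {x y z : Fin 2} (h1 : x ≠ y) (h2 : y ≠ z) : x = z := by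
  fin_cases x <;> fin_cases y <;> fin_cases z <;> simp_all

lemma cut_structure {X : Set V} (h3con : IsKConnected 3 G) (hcubic : IsCubic G)
    (c : G.Coloring (Fin 2)) (htight : IsTightCut G X) (hnontriv : ¬ IsTrivialCut X) :
    ∃ p₁ p₂ p₃ : V × V,
      (p₁.1 ∈ X ∧ p₁.2 ∉ X ∧ G.Adj p₁.1 p₁.2) ∧
      (p₂.1 ∈ X ∧ p₂.2 ∉ X ∧ G.Adj p₂.1 p₂.2) ∧
      (p₃.1 ∈ X ∧ p₃.2 ∉ X ∧ G.Adj p₃.1 p₃.2) ∧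
      (p₁.1 ≠ p₂.1 ∧ p₁.1 ≠ p₃.1 ∧ p₂.1 ≠ p₃.1) ∧
      (p₁.2 ≠ p₂.2 ∧ p₁.2 ≠ p₃.2 ∧ p₂.2 ≠ p₃.2) ∧
      ∀ u w, u ∈ X → w ∉ X → G.Adj u w →
        (u, w) = p₁ ∨ (u, w) = p₂ ∨ (u, w) = p₃ := by
  classical
  -- a perfect matching exists
  have hVne : Nonempty V := by
    have h1 := h3con.1
    have : 0 < Nat.card V := by omega
    exact (Nat.card_pos_iff.mp this).1
  obtain ⟨v₀⟩ := hVne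
  have hdeg : (G.neighborFinset v₀).card = 3 := deg3 hcubic v₀
  have : (G.neighborFinset v₀).Nonempty := Finset.card_pos.mp (by omega)
  obtain ⟨v₁, hv₁⟩ := this
  obtain ⟨M₀, hM₀pm, _⟩ := edge_in_pm hcubic c ((G.mem_neighborFinset _ _).mp hv₁)
  obtain ⟨u₀, w₀, hu₀, hw₀, hM₀, huniq₀⟩ := cut_pair htight hM₀pm
  set Xf := X.toFinset with hXf
  have hmemX : ∀ x, x ∈ Xf ↔ x ∈ X := fun x => Set.mem_toFinset
  have hmemXc : ∀ x, x ∈ Xfᶜ ↔ x ∈ Xᶜ := by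
    intro x; rw [Finset.mem_compl, hmemX, Set.mem_compl_iff]
  have hpar₀ := parity Xf hmemX c hM₀pm hu₀ hw₀ hM₀
    (fun u' w' h1 h2 h3 => (huniq₀ u' w' h1 h2 h3).1)
  -- all cut edges leave from the colour class of u₀
  have hdir : ∀ u w, u ∈ X → w ∉ X → G.Adj u w → c u = c u₀ := by
    intro u w hu hw hadj
    by_contra hne
    obtain ⟨M, hMpm, hMadj⟩ := edge_in_pm hcubic c hadj
    obtain ⟨u', w', hu', hw', hM', huniq'⟩ := cut_pair htight hMpm
    obtain ⟨hequ, heqw⟩ := huniq' u w hu hw hMadj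
    rw [hequ] at hne
    have hparM := parity Xf hmemX c hMpm hu' hw' hM'
      (fun a b h1 h2 h3 => (huniq' a b h1 h2 h3).1)
    have e1 : Xf.filter (fun x => c x = c u') = Xf.filter (fun x => c x ≠ c u₀) := by
      ext x
      simp only [Finset.mem_filter, and_congr_right_iff]
      intro _
      constructor
      · intro h h2; exact hne (h ▸ h2)
      · intro h; exact fin2_eq h hne
    have e2 : Xf.filter (fun x => c x ≠ c u') = Xf.filter (fun x => c x = c u₀) := by
      ext x
      simp only [Finset.mem_filter, and_congr_right_iff]
      intro _
      constructor
      · intro h; exact fin2_eq' h hne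
      · intro h hh; exact hne (hh.symm.trans h)
    rw [e1, e2] at hparM
    omega
  set α := c u₀ with hα
  set AX := Xf.filter fun x => c x = α with hAX
  set BX := Xf.filter fun x => c x ≠ α with hBX
  -- no edges leave from BX
  have hB0 : cnt G BX Xfᶜ = 0 := by
    rw [cnt_eq_sum]
    refine Finset.sum_eq_zero fun b hb => ?_
    rw [Finset.card_eq_zero]
    ext w
    simp only [Finset.mem_filter, Finset.mem_compl, Finset.notMem_empty, iff_false, not_and]
    intro hwX hadj
    simp only [hBX, Finset.mem_filter] at hb
    exact hb.2 (hdir b w ((hmemX b).mp hb.1) (fun h => hwX ((hmemX w).mpr h)) hadj)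
  have hBA : cnt G BX univ = cnt G BX AX := by
    refine cnt_restrict fun b hb w hadj => ?_
    simp only [hBX, Finset.mem_filter] at hb
    have hbX := (hmemX b).mp hb.1
    have hwX : w ∈ X := by
      by_contra hwX
      exact hb.2 (hdir b w hbX hwX hadj)
    simp only [hAX, Finset.mem_filter]
    exact ⟨(hmemX w).mpr hwX, fin2_eq (c.valid hadj.symm) hb.2.symm⟩
  have hArest : cnt G AX univ = cnt G AX (BX ∪ Xfᶜ) := by
    refine cnt_restrict fun a ha w hadj => ?_
    simp only [hAX, Finset.mem_filter] at ha
    have hcw : c w ≠ α := fun h => (c.valid hadj.symm) (h.trans ha.2.symm)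
    by_cases hwf : w ∈ Xf
    · exact Finset.mem_union_left _ (Finset.mem_filter.mpr ⟨hwf, hcw⟩)
    · exact Finset.mem_union_right _ (Finset.mem_compl.mpr hwf)
  have hAsplit : cnt G AX (BX ∪ Xfᶜ) = cnt G AX BX + cnt G AX Xfᶜ :=
    cnt_union (Disjoint.mono_left (Finset.filter_subset _ _) disjoint_compl_right)
  have hABcomm := cnt_comm (G := G) AX BX
  have hAuniv := cnt_univ hcubic AX
  have hBuniv := cnt_univ hcubic BX
  have hAXcut : cnt G AX Xfᶜ = 3 := by omega
  -- the set of cut pairs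
  set CP := (Xf ×ˢ Xfᶜ).filter (fun p : V × V => G.Adj p.1 p.2) with hCP
  have hCPmem : ∀ p : V × V, p ∈ CP ↔ (p.1 ∈ X ∧ p.2 ∉ X ∧ G.Adj p.1 p.2) := by
    intro p
    simp only [hCP, Finset.mem_filter, Finset.mem_product, Finset.mem_compl, hmemX,
      and_assoc]
  have hXfsplit : AX ∪ BX = Xf := Finset.filter_union_filter_not_eq _ Xf
  have hCPcard : CP.card = 3 := by
    have h1 : CP.card = cnt G Xf Xfᶜ := rfl
    have h2 : cnt G Xf Xfᶜ = cnt G Xfᶜ Xf := cnt_comm _ _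
    have h3 : cnt G Xfᶜ (AX ∪ BX) = cnt G Xfᶜ AX + cnt G Xfᶜ BX :=
      cnt_union (Finset.disjoint_filter_filter_not Xf Xf _)
    rw [hXfsplit] at h3
    have h4 := cnt_comm (G := G) Xfᶜ AX
    have h5 := cnt_comm (G := G) Xfᶜ BX
    omega
  -- cardinality facts
  have hXfcard : AX.card + BX.card = Xf.card := by
    rw [← hXfsplit]
    exact (Finset.card_union_of_disjoint (Finset.disjoint_filter_filter_not Xf Xf _)).symm
  have hX1 : X.ncard = Xf.card := Set.ncard_eq_toFinset_card' X
  have hXne1 : X.ncard ≠ 1 := fun h => hnontriv (Or.inl h)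
  have hXcne1 : (Xᶜ : Set V).ncard ≠ 1 := fun h => hnontriv (Or.inr h)
  have hX3 : 3 ≤ Xf.card := by
    rcases Nat.eq_zero_or_pos BX.card with h | h
    · omega
    · omega
  -- complement side parity
  have hparc := parity (X := Xᶜ) Xfᶜ hmemXc c hM₀pm (Set.mem_compl hw₀)
    (by simp [hu₀]) hM₀.symm
    (fun u' w' h1 h2 h3 => by
      have := huniq₀ w' u' (by simpa using h2) (by simpa using h1) h3.symm
      exact this.2)
  have hXc1 : (Xᶜ : Set V).ncard = Xfᶜ.card := by
    rw [Set.ncard_eq_toFinset_card' (Xᶜ : Set V), Set.toFinset_compl]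
  have hXccard : (Xfᶜ.filter fun x => c x = c w₀).card +
      (Xfᶜ.filter fun x => c x ≠ c w₀).card = Xfᶜ.card := by
    exact Finset.card_filter_add_card_filter_not _
  have hXc3 : 3 ≤ Xfᶜ.card := by omega
  -- first coordinates are distinct: at least 3 of them
  have hTfst : 3 ≤ (CP.image Prod.fst).card := by
    refine endpoints_big h3con _ (fun x hx => ?_) (fun u w hu hw hadj => ?_) (by omega)
      ⟨w₀, hw₀⟩
    · obtain ⟨p, hp, rfl⟩ := Finset.mem_image.mp hx
      exact ((hCPmem p).mp hp).1
    · exact Finset.mem_image.mpr ⟨(u, w), (hCPmem _).mpr ⟨hu, hw, hadj⟩, rfl⟩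
  have hTsnd : 3 ≤ (CP.image Prod.snd).card := by
    refine endpoints_big (X := (Xᶜ : Set V)) h3con _ (fun x hx => ?_)
      (fun u w hu hw hadj => ?_) (by omega) ⟨u₀, by simp [hu₀]⟩
    · obtain ⟨p, hp, rfl⟩ := Finset.mem_image.mp hx
      exact ((hCPmem p).mp hp).2.1
    · refine Finset.mem_image.mpr ⟨(w, u), (hCPmem _).mpr ⟨?_, ?_, hadj.symm⟩, rfl⟩
      · simpa using hw
      · simpa using hu
  have hfstinj : Set.InjOn Prod.fst (↑CP : Set (V × V)) := by
    refine Finset.injOn_of_card_image_eq ?_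
    have := Finset.card_image_le (s := CP) (f := Prod.fst)
    omega
  have hsndinj : Set.InjOn Prod.snd (↑CP : Set (V × V)) := by
    refine Finset.injOn_of_card_image_eq ?_
    have := Finset.card_image_le (s := CP) (f := Prod.snd)
    omega
  obtain ⟨q₁, q₂, q₃, h12, h13, h23, hCPeq⟩ := Finset.card_eq_three.mp hCPcard
  have hq₁ : q₁ ∈ CP := by rw [hCPeq]; simp
  have hq₂ : q₂ ∈ CP := by rw [hCPeq]; simp
  have hq₃ : q₃ ∈ CP := by rw [hCPeq]; simp
  refine ⟨q₁, q₂, q₃, (hCPmem q₁).mp hq₁, (hCPmem q₂).mp hq₂, (hCPmem q₃).mp hq₃,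
    ⟨fun h => h12 (hfstinj hq₁ hq₂ h), fun h => h13 (hfstinj hq₁ hq₃ h),
      fun h => h23 (hfstinj hq₂ hq₃ h)⟩,
    ⟨fun h => h12 (hsndinj hq₁ hq₂ h), fun h => h13 (hsndinj hq₁ hq₃ h),
      fun h => h23 (hsndinj hq₂ hq₃ h)⟩, ?_⟩
  intro u w hu hw hadj
  have : (u, w) ∈ CP := (hCPmem _).mpr ⟨hu, hw, hadj⟩
  rw [hCPeq] at this
  simpa using this

end AuxiliaryForStatement5

set_option maxHeartbeats 1000000 in
/-- Let `G` be a 3-connected, cubic, bipartite graph with a non-trivial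
tight cut `∂X`, and let `G1` and `G2` be the two tight cut contractions associated with
`∂X`, with contraction vertices `c1` and `c2`. Then `G` is the star product
`(G1,c1)*(G2,c2)`. -/

theorem tightCutContraction_starProduct {V : Type*} [Fintype V]
    (G : SimpleGraph V) (X : Set V)
    (h3con : IsKConnected 3 G) (hcubic : IsCubic G) (hbip : G.Colorable 2)
    (htight : IsTightCut G X) (hnontriv : ¬ IsTrivialCut X) :
    IsStarProduct G (contractOutside G X) (Sum.inr () : ↥X ⊕ Unit)
      (contractOutside G (Xᶜ : Set V)) (Sum.inr () : ↥(Xᶜ : Set V) ⊕ Unit) := by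
  classical
  obtain ⟨c⟩ := hbip
  obtain ⟨⟨u₁, w₁⟩, ⟨u₂, w₂⟩, ⟨u₃, w₃⟩, ⟨hu₁, hw₁, ha₁⟩, ⟨hu₂, hw₂, ha₂⟩,
    ⟨hu₃, hw₃, ha₃⟩, ⟨hf12, hf13, hf23⟩, ⟨hs12, hs13, hs23⟩, hcover⟩ :=
    cut_structure h3con hcubic c htight hnontriv
  simp only at hf12 hf13 hf23 hs12 hs13 hs23 hu₁ hw₁ ha₁ hu₂ hw₂ ha₂ hu₃ hw₃ ha₃
  have hcov : ∀ u w, u ∈ X → w ∉ X → G.Adj u w →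
      (u = u₁ ∧ w = w₁) ∨ (u = u₂ ∧ w = w₂) ∨ (u = u₃ ∧ w = w₃) := by
    intro u w h1 h2 h3
    simpa [Prod.ext_iff] using hcover u w h1 h2 h3
  have hw₁c : w₁ ∈ (Xᶜ : Set V) := hw₁
  have hw₂c : w₂ ∈ (Xᶜ : Set V) := hw₂
  have hw₃c : w₃ ∈ (Xᶜ : Set V) := hw₃
  -- the three neighbours of the contraction vertices
  have hadj1 : ∀ z, (contractOutside G X).Adj (Sum.inr ()) z ↔
      (z = Sum.inl ⟨u₁, hu₁⟩ ∨ z = Sum.inl ⟨u₂, hu₂⟩ ∨ z = Sum.inl ⟨u₃, hu₃⟩) := by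
    intro z
    constructor
    · intro h
      unfold contractOutside at h; rw [fromRel_adj] at h
      obtain ⟨hne, h | h⟩ := h
      · rcases h with ⟨u, v, h1, -⟩ | ⟨u, w, -, h1, -⟩ <;> exact absurd h1 (by simp)
      · rcases h with ⟨u, v, -, h2, -⟩ | ⟨u, w, hwX, h1, -, hadj⟩
        · exact absurd h2 (by simp)
        · rcases hcov ↑u w u.2 hwX hadj with ⟨h', -⟩ | ⟨h', -⟩ | ⟨h', -⟩
          · exact Or.inl (by rw [h1]; congr 1; exact Subtype.ext h')
          · exact Or.inr (Or.inl (by rw [h1]; congr 1; exact Subtype.ext h'))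
          · exact Or.inr (Or.inr (by rw [h1]; congr 1; exact Subtype.ext h'))
    · rintro (rfl | rfl | rfl) <;>
        (unfold contractOutside; rw [fromRel_adj]; refine ⟨by simp, Or.inr (Or.inr ?_)⟩)
      · exact ⟨⟨u₁, hu₁⟩, w₁, hw₁, rfl, rfl, ha₁⟩
      · exact ⟨⟨u₂, hu₂⟩, w₂, hw₂, rfl, rfl, ha₂⟩
      · exact ⟨⟨u₃, hu₃⟩, w₃, hw₃, rfl, rfl, ha₃⟩
  have hadj2 : ∀ z, (contractOutside G (Xᶜ : Set V)).Adj (Sum.inr ()) z ↔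
      (z = Sum.inl ⟨w₁, hw₁c⟩ ∨ z = Sum.inl ⟨w₂, hw₂c⟩ ∨ z = Sum.inl ⟨w₃, hw₃c⟩) := by
    intro z
    constructor
    · intro h
      unfold contractOutside at h; rw [fromRel_adj] at h
      obtain ⟨hne, h | h⟩ := h
      · rcases h with ⟨u, v, h1, -⟩ | ⟨u, w, -, h1, -⟩ <;> exact absurd h1 (by simp)
      · rcases h with ⟨u, v, -, h2, -⟩ | ⟨u, w, hwX, h1, -, hadj⟩
        · exact absurd h2 (by simp)
        · have hwX' : w ∈ X := by simpa using hwX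
          have huX' : (u : V) ∉ X := u.2
          rcases hcov w ↑u hwX' huX' hadj.symm with ⟨-, h'⟩ | ⟨-, h'⟩ | ⟨-, h'⟩
          · exact Or.inl (by rw [h1]; congr 1; exact Subtype.ext h')
          · exact Or.inr (Or.inl (by rw [h1]; congr 1; exact Subtype.ext h'))
          · exact Or.inr (Or.inr (by rw [h1]; congr 1; exact Subtype.ext h'))
    · rintro (rfl | rfl | rfl) <;>
        (unfold contractOutside; rw [fromRel_adj]; refine ⟨by simp, Or.inr (Or.inr ?_)⟩)
      · exact ⟨⟨w₁, hw₁c⟩, u₁, by simpa using hu₁, rfl, rfl, ha₁.symm⟩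
      · exact ⟨⟨w₂, hw₂c⟩, u₂, by simpa using hu₂, rfl, rfl, ha₂.symm⟩
      · exact ⟨⟨w₃, hw₃c⟩, u₃, by simpa using hu₃, rfl, rfl, ha₃.symm⟩
  have hN1 : (contractOutside G X).neighborSet (Sum.inr ()) =
      {Sum.inl ⟨u₁, hu₁⟩, Sum.inl ⟨u₂, hu₂⟩, Sum.inl ⟨u₃, hu₃⟩} := by
    ext z
    rw [mem_neighborSet, hadj1 z]
    simp [Set.mem_insert_iff]
  have hN2 : (contractOutside G (Xᶜ : Set V)).neighborSet (Sum.inr ()) =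
      {Sum.inl ⟨w₁, hw₁c⟩, Sum.inl ⟨w₂, hw₂c⟩, Sum.inl ⟨w₃, hw₃c⟩} := by
    ext z
    rw [mem_neighborSet, hadj2 z]
    simp [Set.mem_insert_iff]
  -- the maps
  set f : ↥X ⊕ Unit → V := Sum.elim Subtype.val (fun _ => w₁) with hfdef
  set g : ↥(Xᶜ : Set V) ⊕ Unit → V := Sum.elim Subtype.val (fun _ => u₁) with hgdef
  set m : ↥X ⊕ Unit → ↥(Xᶜ : Set V) ⊕ Unit := Sum.elim
    (fun u => if (u : V) = u₁ then Sum.inl ⟨w₁, hw₁c⟩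
      else if (u : V) = u₂ then Sum.inl ⟨w₂, hw₂c⟩
      else if (u : V) = u₃ then Sum.inl ⟨w₃, hw₃c⟩
      else Sum.inr ()) (fun _ => Sum.inr ()) with hmdef
  have hm1 : m (Sum.inl ⟨u₁, hu₁⟩) = Sum.inl ⟨w₁, hw₁c⟩ := by
    simp [hmdef]
  have hm2 : m (Sum.inl ⟨u₂, hu₂⟩) = Sum.inl ⟨w₂, hw₂c⟩ := by
    simp [hmdef, Ne.symm hf12]
  have hm3 : m (Sum.inl ⟨u₃, hu₃⟩) = Sum.inl ⟨w₃, hw₃c⟩ := by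
    simp [hmdef, Ne.symm hf13, Ne.symm hf23]
  -- adjacency transfer inside X
  have hG1in : ∀ (a b : ↥X), G.Adj ↑a ↑b → (contractOutside G X).Adj (Sum.inl a) (Sum.inl b) := by
    intro a b h
    unfold contractOutside
    rw [fromRel_adj]
    refine ⟨fun hh => G.ne_of_adj h (congrArg Subtype.val (Sum.inl.inj hh)), ?_⟩
    exact Or.inl (Or.inl ⟨a, b, rfl, rfl, h⟩)
  have hG1out : ∀ (a b : ↥X), (contractOutside G X).Adj (Sum.inl a) (Sum.inl b) → G.Adj ↑a ↑b := by
    intro a b h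
    unfold contractOutside at h; rw [fromRel_adj] at h
    obtain ⟨-, h | h⟩ := h
    · rcases h with ⟨u, v, h1, h2, h3⟩ | ⟨u, w, -, -, h2, -⟩
      · cases Sum.inl.inj h1; cases Sum.inl.inj h2; exact h3
      · exact absurd h2 (by simp)
    · rcases h with ⟨u, v, h1, h2, h3⟩ | ⟨u, w, -, -, h2, -⟩
      · cases Sum.inl.inj h1; cases Sum.inl.inj h2; exact h3.symm
      · exact absurd h2 (by simp)
  have hG2in : ∀ (a b : ↥(Xᶜ : Set V)), G.Adj ↑a ↑b →
      (contractOutside G (Xᶜ : Set V)).Adj (Sum.inl a) (Sum.inl b) := by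
    intro a b h
    unfold contractOutside
    rw [fromRel_adj]
    refine ⟨fun hh => G.ne_of_adj h (congrArg Subtype.val (Sum.inl.inj hh)), ?_⟩
    exact Or.inl (Or.inl ⟨a, b, rfl, rfl, h⟩)
  have hG2out : ∀ (a b : ↥(Xᶜ : Set V)),
      (contractOutside G (Xᶜ : Set V)).Adj (Sum.inl a) (Sum.inl b) → G.Adj ↑a ↑b := by
    intro a b h
    unfold contractOutside at h; rw [fromRel_adj] at h
    obtain ⟨-, h | h⟩ := h
    · rcases h with ⟨u, v, h1, h2, h3⟩ | ⟨u, w, -, -, h2, -⟩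
      · cases Sum.inl.inj h1; cases Sum.inl.inj h2; exact h3
      · exact absurd h2 (by simp)
    · rcases h with ⟨u, v, h1, h2, h3⟩ | ⟨u, w, -, -, h2, -⟩
      · cases Sum.inl.inj h1; cases Sum.inl.inj h2; exact h3.symm
      · exact absurd h2 (by simp)
  refine ⟨f, g, m, ?_, ?_, ?_, ?_, ?_, ?_, ?_, ?_⟩
  · rw [hN1]
    refine Set.ncard_eq_three.mpr ⟨_, _, _, ?_, ?_, ?_, rfl⟩ <;> simp [hf12, hf13, hf23]
  · rw [hN2]
    refine Set.ncard_eq_three.mpr ⟨_, _, _, ?_, ?_, ?_, rfl⟩ <;> simp [hs12, hs13, hs23]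
  · rintro (x | ⟨⟩) hx (y | ⟨⟩) hy h
    · exact congrArg Sum.inl (Subtype.ext h)
    · exact absurd rfl hy
    · exact absurd rfl hx
    · exact absurd rfl hx
  · rintro (x | ⟨⟩) hx (y | ⟨⟩) hy h
    · exact congrArg Sum.inl (Subtype.ext h)
    · exact absurd rfl hy
    · exact absurd rfl hx
    · exact absurd rfl hx
  · rintro (x | ⟨⟩) (y | ⟨⟩) hx hy h
    · have h' : (x : V) = (y : V) := h
      exact y.2 (h' ▸ x.2)
    · exact hy rfl
    · exact hx rfl
    · exact hx rfl
  · intro v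
    by_cases hv : v ∈ X
    · exact Or.inl ⟨Sum.inl ⟨v, hv⟩, by simp, rfl⟩
    · exact Or.inr ⟨Sum.inl ⟨v, hv⟩, by simp, rfl⟩
  · rw [hN1, hN2]
    refine ⟨?_, ?_, ?_⟩
    · intro z hz
      simp only [Set.mem_insert_iff, Set.mem_singleton_iff] at hz ⊢
      rcases hz with rfl | rfl | rfl
      · rw [hm1]; exact Or.inl rfl
      · rw [hm2]; exact Or.inr (Or.inl rfl)
      · rw [hm3]; exact Or.inr (Or.inr rfl)
    · intro z hz z' hz' h
      simp only [Set.mem_insert_iff, Set.mem_singleton_iff] at hz hz'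
      rcases hz with rfl | rfl | rfl <;> rcases hz' with rfl | rfl | rfl <;>
          simp only [hm1, hm2, hm3, Sum.inl.injEq, Subtype.mk.injEq] at h <;>
        first
          | rfl
          | exact absurd h hs12 | exact absurd h hs13 | exact absurd h hs23
          | exact absurd h.symm hs12 | exact absurd h.symm hs13 | exact absurd h.symm hs23
    · intro z hz
      simp only [Set.mem_insert_iff, Set.mem_singleton_iff] at hz
      rcases hz with rfl | rfl | rfl
      · exact ⟨Sum.inl ⟨u₁, hu₁⟩, Or.inl rfl, hm1⟩
      · exact ⟨Sum.inl ⟨u₂, hu₂⟩, Or.inr (Or.inl rfl), hm2⟩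
      · exact ⟨Sum.inl ⟨u₃, hu₃⟩, Or.inr (Or.inr rfl), hm3⟩
  · intro a b
    constructor
    · intro hab
      by_cases haX : a ∈ X <;> by_cases hbX : b ∈ X
      · exact Or.inl ⟨Sum.inl ⟨a, haX⟩, Sum.inl ⟨b, hbX⟩, by simp, by simp,
          hG1in _ _ hab, rfl, rfl⟩
      · rcases hcov a b haX hbX hab with ⟨ha', hb'⟩ | ⟨ha', hb'⟩ | ⟨ha', hb'⟩
        · exact Or.inr (Or.inr ⟨Sum.inl ⟨u₁, hu₁⟩, (hadj1 _).mpr (Or.inl rfl),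
            Or.inl ⟨ha', by rw [hm1]; exact hb'⟩⟩)
        · exact Or.inr (Or.inr ⟨Sum.inl ⟨u₂, hu₂⟩, (hadj1 _).mpr (Or.inr (Or.inl rfl)),
            Or.inl ⟨ha', by rw [hm2]; exact hb'⟩⟩)
        · exact Or.inr (Or.inr ⟨Sum.inl ⟨u₃, hu₃⟩, (hadj1 _).mpr (Or.inr (Or.inr rfl)),
            Or.inl ⟨ha', by rw [hm3]; exact hb'⟩⟩)
      · rcases hcov b a hbX haX hab.symm with ⟨hb', ha'⟩ | ⟨hb', ha'⟩ | ⟨hb', ha'⟩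
        · exact Or.inr (Or.inr ⟨Sum.inl ⟨u₁, hu₁⟩, (hadj1 _).mpr (Or.inl rfl),
            Or.inr ⟨hb', by rw [hm1]; exact ha'⟩⟩)
        · exact Or.inr (Or.inr ⟨Sum.inl ⟨u₂, hu₂⟩, (hadj1 _).mpr (Or.inr (Or.inl rfl)),
            Or.inr ⟨hb', by rw [hm2]; exact ha'⟩⟩)
        · exact Or.inr (Or.inr ⟨Sum.inl ⟨u₃, hu₃⟩, (hadj1 _).mpr (Or.inr (Or.inr rfl)),
            Or.inr ⟨hb', by rw [hm3]; exact ha'⟩⟩)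
      · exact Or.inr (Or.inl ⟨Sum.inl ⟨a, haX⟩, Sum.inl ⟨b, hbX⟩, by simp, by simp,
          hG2in _ _ hab, rfl, rfl⟩)
    · rintro (⟨x, y, hx, hy, hxy, rfl, rfl⟩ | ⟨x, y, hx, hy, hxy, rfl, rfl⟩ |
        ⟨x, hvx, (⟨rfl, rfl⟩ | ⟨rfl, rfl⟩)⟩)
      · rcases x with x | ⟨⟩
        · rcases y with y | ⟨⟩
          · exact hG1out _ _ hxy
          · exact absurd rfl hy
        · exact absurd rfl hx
      · rcases x with x | ⟨⟩
        · rcases y with y | ⟨⟩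
          · exact hG2out _ _ hxy
          · exact absurd rfl hy
        · exact absurd rfl hx
      · rcases (hadj1 x).mp hvx with rfl | rfl | rfl
        · rw [hm1]; exact ha₁
        · rw [hm2]; exact ha₂
        · rw [hm3]; exact ha₃
      · rcases (hadj1 x).mp hvx with rfl | rfl | rfl
        · rw [hm1]; exact ha₁.symm
        · rw [hm2]; exact ha₂.symm
        · rw [hm3]; exact ha₃.symm
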